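/- Let G be a finite simple graph, let xy be an edge of G, and let v and w be adjacent twins in G. Then v and w are adjacent twins in G∧xy. -/

import Mathlib

/-!  Basic notions: local complementation, edge pivot, pivot-equivalence, pivot-minors. -/

variable {V : Type*} {W : Type*}

/-- Local complementation at a vertex `u`: complement the adjacency inside the
neighbourhood of `u`. -/
def localComp (G : SimpleGraph V) (u : V) : SimpleGraph V where
  Adj x y := x ≠ y ∧
    ((G.Adj u x ∧ G.Adj u y ∧ ¬ G.Adj x y) ∨ (¬ (G.Adj u x ∧ G.Adj u y) ∧ G.Adj x y))
  symm := by
    constructor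
    intro x y h
    obtain ⟨hne, h⟩ := h
    refine ⟨hne.symm, ?_⟩
    rw [G.adj_comm y x]
    tauto
  loopless := by
    constructor
    intro x h
    exact h.1 rfl

/-- The edge pivot `G ∧ uv = ((G * u) * v) * u`. -/
def pivotEdge (G : SimpleGraph V) (u v : V) : SimpleGraph V :=
  localComp (localComp (localComp G u) v) u

/-- One pivot step: pivoting along an edge of the graph. -/
def PivotStep (G G' : SimpleGraph V) : Prop :=
  ∃ u v, G.Adj u v ∧ G' = pivotEdge G u v

/-- Two graphs on the same vertex set are pivot-equivalent if one can be obtained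
from the other by a sequence of edge pivots. -/
def PivotEquiv (G G' : SimpleGraph V) : Prop :=
  Relation.ReflTransGen PivotStep G G'

/-- `H` is a pivot-minor of `G` on the vertex subset `s`: `H` is obtained (up to
isomorphism) from `G` by a sequence of edge pivots and deletions of the vertices
outside `s`.  Since pivoting an edge commutes with deleting a vertex not on that
edge, this is equivalent to performing all the edge pivots first and then deleting
the vertices outside `s`, which is how we state it. -/
def HasPivotMinorOn (G : SimpleGraph V) (s : Set V) (H : SimpleGraph W) : Prop :=
  ∃ G' : SimpleGraph V, PivotEquiv G G' ∧ Nonempty ((G'.induce s) ≃g H)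

/-- `G` contains a pivot-minor isomorphic to `H`. -/
def HasPivotMinor (G : SimpleGraph V) (H : SimpleGraph W) : Prop :=
  ∃ s : Set V, HasPivotMinorOn G s H

/-- `G'` is a result of contracting the vertex `v` in `G` (denoted `G/v`):
if `v` is isolated this is `G - v`, and otherwise it is `(G ∧ zv) - v`
for some neighbour `z` of `v` (well defined up to pivot-equivalence). -/
def IsContraction (G : SimpleGraph V) (v : V) (G' : SimpleGraph ↥{u : V | u ≠ v}) : Prop :=
  ((∀ z, ¬ G.Adj v z) ∧ G' = G.induce {u : V | u ≠ v}) ∨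
    (∃ z, G.Adj v z ∧ G' = (pivotEdge G z v).induce {u : V | u ≠ v})

/-- `G` is `H`-pivot-unique: `G` contains a pivot-minor isomorphic to `H` and for
every vertex `v`, at most one of `G - v` and `G / v` contains a pivot-minor
isomorphic to `H`. -/
def PivotUnique (G : SimpleGraph V) (H : SimpleGraph W) : Prop :=
  HasPivotMinor G H ∧
    ∀ v : V, ¬ (HasPivotMinor (G.induce {u : V | u ≠ v}) H ∧
      ∃ G' : SimpleGraph ↥{u : V | u ≠ v}, IsContraction G v G' ∧ HasPivotMinor G' H)

/-- `G` contains an induced subgraph isomorphic to `H`. -/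
def HasInducedSubgraphIso (G : SimpleGraph V) (H : SimpleGraph W) : Prop :=
  ∃ s : Set V, Nonempty ((G.induce s) ≃g H)

set_option maxHeartbeats 1000000

lemma localComp_adj (G : SimpleGraph V) (u a b : V) :
    (localComp G u).Adj a b ↔ a ≠ b ∧
      ((G.Adj u a ∧ G.Adj u b ∧ ¬ G.Adj a b) ∨ (¬ (G.Adj u a ∧ G.Adj u b) ∧ G.Adj a b)) :=
  Iff.rfl

lemma pivot_adj_xy (G : SimpleGraph V) {x y : V} (hxy : G.Adj x y) :
    (pivotEdge G x y).Adj x y := by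
  classical
  have hnxy : ¬ x = y := hxy.ne
  have hnyx : ¬ y = x := fun h => hnxy h.symm
  have syx : G.Adj y x ↔ G.Adj x y := G.adj_comm y x
  have ix : ¬ G.Adj x x := G.irrefl
  have iy : ¬ G.Adj y y := G.irrefl
  simp only [pivotEdge, localComp_adj, ne_eq, hnxy, hnyx, ix, iy, syx, hxy,
    not_false_iff, not_false_eq_true, not_true, true_and, and_true, false_and, and_false,
    false_or, or_false, true_or, or_true, and_self, not_and, true_implies]

lemma pivot_adj_left (G : SimpleGraph V) {x y b : V} (hxy : G.Adj x y)
    (hbx : b ≠ x) (hby : b ≠ y) :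
    ((pivotEdge G x y).Adj x b ↔ G.Adj y b) := by
  classical
  have hnxy : ¬ x = y := hxy.ne
  have hnyx : ¬ y = x := fun h => hnxy h.symm
  have e5 : ¬ b = x := hbx
  have e6 : ¬ x = b := fun h => hbx h.symm
  have e7 : ¬ b = y := hby
  have e8 : ¬ y = b := fun h => hby h.symm
  have syx : G.Adj y x ↔ G.Adj x y := G.adj_comm y x
  have sbx : G.Adj b x ↔ G.Adj x b := G.adj_comm b x
  have sby : G.Adj b y ↔ G.Adj y b := G.adj_comm b y
  have ix : ¬ G.Adj x x := G.irrefl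
  have iy : ¬ G.Adj y y := G.irrefl
  simp only [pivotEdge, localComp_adj, ne_eq, hnxy, hnyx, e5, e6, e7, e8, ix, iy,
    syx, sbx, sby, hxy,
    not_false_iff, not_false_eq_true, not_true, true_and, and_true, false_and, and_false,
    false_or, or_false, true_or, or_true, and_self, not_and, true_implies]
  by_cases p1 : G.Adj x b <;> by_cases p2 : G.Adj y b <;> simp_all

lemma pivot_adj_right (G : SimpleGraph V) {x y b : V} (hxy : G.Adj x y)
    (hbx : b ≠ x) (hby : b ≠ y) :
    ((pivotEdge G x y).Adj y b ↔ G.Adj x b) := by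
  classical
  have hnxy : ¬ x = y := hxy.ne
  have hnyx : ¬ y = x := fun h => hnxy h.symm
  have e5 : ¬ b = x := hbx
  have e6 : ¬ x = b := fun h => hbx h.symm
  have e7 : ¬ b = y := hby
  have e8 : ¬ y = b := fun h => hby h.symm
  have syx : G.Adj y x ↔ G.Adj x y := G.adj_comm y x
  have sbx : G.Adj b x ↔ G.Adj x b := G.adj_comm b x
  have sby : G.Adj b y ↔ G.Adj y b := G.adj_comm b y
  have ix : ¬ G.Adj x x := G.irrefl
  have iy : ¬ G.Adj y y := G.irrefl
  simp only [pivotEdge, localComp_adj, ne_eq, hnxy, hnyx, e5, e6, e7, e8, ix, iy,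
    syx, sbx, sby, hxy,
    not_false_iff, not_false_eq_true, not_true, true_and, and_true, false_and, and_false,
    false_or, or_false, true_or, or_true, and_self, not_and, true_implies]
  by_cases p1 : G.Adj x b <;> by_cases p2 : G.Adj y b <;> simp_all

lemma pivot_adj_other (G : SimpleGraph V) {x y a b : V} (hxy : G.Adj x y)
    (hax : a ≠ x) (hay : a ≠ y) (hbx : b ≠ x) (hby : b ≠ y) (hab : a ≠ b) :
    ((pivotEdge G x y).Adj a b ↔
      (G.Adj a b ↔ ((G.Adj x a ∧ G.Adj y b) ↔ (G.Adj y a ∧ G.Adj x b)))) := by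
  classical
  have hnxy : ¬ x = y := hxy.ne
  have hnyx : ¬ y = x := fun h => hnxy h.symm
  have e1 : ¬ a = x := hax
  have e2 : ¬ x = a := fun h => hax h.symm
  have e3 : ¬ a = y := hay
  have e4 : ¬ y = a := fun h => hay h.symm
  have e5 : ¬ b = x := hbx
  have e6 : ¬ x = b := fun h => hbx h.symm
  have e7 : ¬ b = y := hby
  have e8 : ¬ y = b := fun h => hby h.symm
  have e11 : ¬ a = b := hab
  have e12 : ¬ b = a := fun h => hab h.symm
  have syx : G.Adj y x ↔ G.Adj x y := G.adj_comm y x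
  have sax : G.Adj a x ↔ G.Adj x a := G.adj_comm a x
  have say : G.Adj a y ↔ G.Adj y a := G.adj_comm a y
  have sbx : G.Adj b x ↔ G.Adj x b := G.adj_comm b x
  have sby : G.Adj b y ↔ G.Adj y b := G.adj_comm b y
  have sba : G.Adj b a ↔ G.Adj a b := G.adj_comm b a
  have ix : ¬ G.Adj x x := G.irrefl
  have iy : ¬ G.Adj y y := G.irrefl
  simp only [pivotEdge, localComp_adj, ne_eq, hnxy, hnyx, e1, e2, e3, e4, e5, e6, e7, e8,
    e11, e12, ix, iy, syx, sax, say, sbx, sby, sba, hxy,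
    not_false_iff, not_false_eq_true, not_true, true_and, and_true, false_and, and_false,
    false_or, or_false, true_or, or_true, and_self, not_and, true_implies]
  by_cases p1 : G.Adj x a <;> by_cases p2 : G.Adj y a <;>
  by_cases p3 : G.Adj x b <;> by_cases p4 : G.Adj y b <;> by_cases p5 : G.Adj a b <;>
  simp_all

/-- Let `xy` be an edge of `G` and let `v, w` be adjacent twins
in `G`. Then `v` and `w` are adjacent twins in `G ∧ xy`. -/
theorem adjacentTwins_pivot {V : Type*} [Fintype V] (G : SimpleGraph V)
    (x y v w : V) (hxy : G.Adj x y) (hvw : G.Adj v w)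
    (htwin : ∀ z, z ≠ v → z ≠ w → (G.Adj v z ↔ G.Adj w z)) :
    (pivotEdge G x y).Adj v w ∧
      ∀ z, z ≠ v → z ≠ w →
        ((pivotEdge G x y).Adj v z ↔ (pivotEdge G x y).Adj w z) := by
  classical
  have hnvw : v ≠ w := hvw.ne
  have hnxy : x ≠ y := hxy.ne
  constructor
  · -- v, w adjacent in the pivot
    by_cases hxv : x = v
    · by_cases hyw : y = w
      · rw [← hxv, ← hyw]; exact pivot_adj_xy G hxy
      · -- x = v, y ≠ w : pivot.Adj x w ↔ G.Adj y w
        have hwx : w ≠ x := fun h => hnvw (hxv.symm.trans h.symm)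
        have hwy : w ≠ y := fun h => hyw h.symm
        rw [← hxv, pivot_adj_left G hxy hwx hwy]
        have hyv : y ≠ v := fun h => hnxy (hxv.trans h.symm)
        have : G.Adj v y := hxv ▸ hxy
        exact ((htwin y hyv (fun h => hwy h.symm)).mp this).symm
    · by_cases hxw : x = w
      · by_cases hyv : y = v
        · rw [← hxw, ← hyv]; exact (pivot_adj_xy G hxy).symm
        · have hvx : v ≠ x := fun h => hxv h.symm
          have hvy : v ≠ y := fun h => hyv h.symm
          rw [(pivotEdge G x y).adj_comm, ← hxw, pivot_adj_left G hxy hvx hvy]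
          have : G.Adj w y := hxw ▸ hxy
          exact ((htwin y hvy.symm (fun h => hnxy (hxw.trans h.symm))).mpr this).symm
      · by_cases hyv : y = v
        · -- y = v : pivot.Adj y w ↔ G.Adj x w
          have hwx : w ≠ x := fun h => hxw h.symm
          have hwy : w ≠ y := fun h => hnvw (hyv ▸ h.symm : v = w)
          rw [← hyv, pivot_adj_right G hxy hwx hwy]
          have : G.Adj v x := hyv ▸ hxy.symm
          exact ((htwin x hxv hxw).mp this).symm
        · by_cases hyw : y = w
          · have hvx : v ≠ x := fun h => hxv h.symm
            have hvy : v ≠ y := fun h => hyv h.symm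
            rw [(pivotEdge G x y).adj_comm, ← hyw, pivot_adj_right G hxy hvx hvy]
            have : G.Adj w x := hyw ▸ hxy.symm
            exact ((htwin x hxv hxw).mpr this).symm
          · -- generic case
            have hvx : v ≠ x := fun h => hxv h.symm
            have hvy : v ≠ y := fun h => hyv h.symm
            have hwx : w ≠ x := fun h => hxw h.symm
            have hwy : w ≠ y := fun h => hyw h.symm
            rw [pivot_adj_other G hxy hvx hvy hwx hwy hnvw]
            have t1 : G.Adj x v ↔ G.Adj x w := by
              rw [G.adj_comm x v, G.adj_comm x w]; exact htwin x hxv hxw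
            have t2 : G.Adj y v ↔ G.Adj y w := by
              rw [G.adj_comm y v, G.adj_comm y w]; exact htwin y hyv hyw
            tauto
  · intro z hzv hzw
    have hzv' : ¬ z = v := hzv
    have hzw' : ¬ z = w := hzw
    have tz : G.Adj v z ↔ G.Adj w z := htwin z hzv hzw
    by_cases hxv : x = v
    · -- x = v
      have hyv : y ≠ v := fun h => hnxy (hxv.trans h.symm)
      have hwx : w ≠ x := fun h => hnvw (hxv.symm.trans h.symm)
      have hzx : z ≠ x := fun h => hzv (h.trans hxv)
      by_cases hyw : y = w
      · have hzy : z ≠ y := fun h => hzw (h.trans hyw)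
        rw [← hxv, ← hyw] at tz ⊢
        rw [pivot_adj_left G hxy hzx hzy, pivot_adj_right G hxy hzx hzy]
        exact tz.symm
      · have hwy : w ≠ y := fun h => hyw h.symm
        by_cases hzy : z = y
        · -- z = y : both sides true
          constructor
          · intro _
            rw [(pivotEdge G x y).adj_comm, hzy, pivot_adj_right G hxy hwx hwy]
            exact hxv.symm ▸ hvw
          · intro _
            rw [(pivotEdge G x y).adj_comm, hzy, ← hxv]
            exact (pivot_adj_xy G hxy).symm
        · -- z ∉ {x,y}
          have hzy' : z ≠ y := hzy
          rw [← hxv, pivot_adj_left G hxy hzx hzy',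
            pivot_adj_other G hxy hwx hwy hzx hzy'
              (fun h => hzw h.symm)]
          have f1 : G.Adj x w := hxv ▸ hvw
          have f2 : G.Adj y w := by
            have : G.Adj v y := hxv ▸ hxy
            exact ((htwin y hyv hwy.symm).mp this).symm
          have f3 : G.Adj x z ↔ G.Adj w z := by
            rw [hxv]; exact tz
          tauto
    · by_cases hxw : x = w
      · -- x = w
        have hyw : y ≠ w := fun h => hnxy (hxw.trans h.symm)
        have hvx : v ≠ x := fun h => hnvw (h.trans hxw)
        have hzx : z ≠ x := fun h => hzw (h.trans hxw)
        by_cases hyv : y = v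
        · have hzy : z ≠ y := fun h => hzv (h.trans hyv)
          rw [← hxw, ← hyv, pivot_adj_right G hxy hzx hzy, pivot_adj_left G hxy hzx hzy]
          rw [← hxw, ← hyv] at tz
          exact tz.symm
        · have hvy : v ≠ y := fun h => hyv h.symm
          by_cases hzy : z = y
          · constructor
            · intro _
              rw [(pivotEdge G x y).adj_comm, hzy, ← hxw]
              exact (pivot_adj_xy G hxy).symm
            · intro _
              rw [(pivotEdge G x y).adj_comm, hzy, pivot_adj_right G hxy hvx hvy]
              exact hxw.symm ▸ hvw.symm
          · have hzy' : z ≠ y := hzy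
            rw [← hxw, pivot_adj_left G hxy hzx hzy',
              pivot_adj_other G hxy hvx hvy hzx hzy'
                (fun h => hzv h.symm)]
            have f1 : G.Adj x v := hxw ▸ hvw.symm
            have f2 : G.Adj y v := by
              have : G.Adj w y := hxw ▸ hxy
              exact ((htwin y hvy.symm hyw).mpr this).symm
            have f3 : G.Adj x z ↔ G.Adj v z := by
              rw [hxw]; exact tz.symm
            tauto
      · by_cases hyv : y = v
        · -- y = v, x ∉ {v,w}
          have hvx : v ≠ x := fun h => hxv h.symm
          have hwx : w ≠ x := fun h => hxw h.symm
          have hwy : w ≠ y := fun h => hnvw (hyv ▸ h.symm : v = w)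
          by_cases hzx : z = x
          · constructor
            · intro _
              rw [(pivotEdge G x y).adj_comm, hzx, pivot_adj_left G hxy hwx hwy]
              exact hyv.symm ▸ hvw
            · intro _
              rw [(pivotEdge G x y).adj_comm, hzx, ← hyv]
              exact pivot_adj_xy G hxy
          · have hzx' : z ≠ x := hzx
            have hzy : z ≠ y := fun h => hzv (h.trans hyv)
            rw [← hyv, pivot_adj_right G hxy hzx' hzy,
              pivot_adj_other G hxy hwx hwy hzx' hzy
                (fun h => hzw h.symm)]
            have f1 : G.Adj x w := by
              have : G.Adj v x := hyv ▸ hxy.symm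
              exact ((htwin x hxv hxw).mp this).symm
            have f2 : G.Adj y w := hyv ▸ hvw
            have f3 : G.Adj y z ↔ G.Adj w z := by
              rw [hyv]; exact tz
            tauto
        · by_cases hyw : y = w
          · -- y = w, x ∉ {v,w}
            have hvx : v ≠ x := fun h => hxv h.symm
            have hvy : v ≠ y := fun h => hyv h.symm
            have hwx : w ≠ x := fun h => hxw h.symm
            by_cases hzx : z = x
            · constructor
              · intro _
                rw [(pivotEdge G x y).adj_comm, hzx, ← hyw]
                exact pivot_adj_xy G hxy
              · intro _
                rw [(pivotEdge G x y).adj_comm, hzx, pivot_adj_left G hxy hvx hvy]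
                exact hyw.symm ▸ hvw.symm
            · have hzx' : z ≠ x := hzx
              have hzy : z ≠ y := fun h => hzw (h.trans hyw)
              rw [← hyw,
                pivot_adj_other G hxy hvx hvy hzx' hzy
                  (fun h => hzv h.symm),
                pivot_adj_right G hxy hzx' hzy]
              have f1 : G.Adj x v := by
                have : G.Adj w x := hyw ▸ hxy.symm
                exact ((htwin x hxv hxw).mpr this).symm
              have f2 : G.Adj y v := hyw ▸ hvw.symm
              have f3 : G.Adj y z ↔ G.Adj v z := by
                rw [hyw]; exact tz.symm
              tauto
          · -- fully generic
            have hvx : v ≠ x := fun h => hxv h.symm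
            have hvy : v ≠ y := fun h => hyv h.symm
            have hwx : w ≠ x := fun h => hxw h.symm
            have hwy : w ≠ y := fun h => hyw h.symm
            have t1 : G.Adj x v ↔ G.Adj x w := by
              rw [G.adj_comm x v, G.adj_comm x w]; exact htwin x hxv hxw
            have t2 : G.Adj y v ↔ G.Adj y w := by
              rw [G.adj_comm y v, G.adj_comm y w]; exact htwin y hyv hyw
            by_cases hzx : z = x
            · rw [(pivotEdge G x y).adj_comm v z, (pivotEdge G x y).adj_comm w z, hzx,
                pivot_adj_left G hxy hvx hvy, pivot_adj_left G hxy hwx hwy]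
              exact t2
            · by_cases hzy : z = y
              · rw [(pivotEdge G x y).adj_comm v z, (pivotEdge G x y).adj_comm w z, hzy,
                  pivot_adj_right G hxy hvx hvy, pivot_adj_right G hxy hwx hwy]
                exact t1
              · have hzx' : z ≠ x := hzx
                have hzy' : z ≠ y := hzy
                rw [pivot_adj_other G hxy hvx hvy hzx' hzy'
                    (fun h => hzv h.symm),
                  pivot_adj_other G hxy hwx hwy hzx' hzy'
                    (fun h => hzw h.symm)]
                tauto
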